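/- For each n ≥ 1, D(ℝⁿ,ℂⁿ) ⊆ D(ℂⁿ,ℂⁿ). -/

import Mathlib

/-- φ_n(X,Y) = Σ_{i=1}^n (x_i − y_i)². -/
noncomputable def phi (n : ℕ) (X Y : Fin n → ℂ) : ℂ := ∑ i, (X i - Y i) ^ 2

/-- D(ℝⁿ,ℂⁿ): the set of all real d > 0 such that for all X, Y ∈ ℝⁿ ⊆ ℂⁿ with
φ_n(X,Y) = d² there is a finite set S_XY with {X,Y} ⊆ S_XY ⊆ ℝⁿ such that every
map from S_XY to ℂⁿ preserving unit distance on S_XY preserves the distance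
between X and Y. -/
def DRC (n : ℕ) : Set ℝ :=
  {d | 0 < d ∧ ∀ X Y : Fin n → ℂ, (∀ i, (X i).im = 0) → (∀ i, (Y i).im = 0) →
    phi n X Y = (d : ℂ) ^ 2 →
    ∃ S : Finset (Fin n → ℂ), X ∈ S ∧ Y ∈ S ∧
      (∀ P ∈ S, ∀ i, (P i).im = 0) ∧
      ∀ f : (Fin n → ℂ) → (Fin n → ℂ),
        (∀ P ∈ S, ∀ Q ∈ S, phi n P Q = 1 → phi n (f P) (f Q) = 1) →
        phi n (f X) (f Y) = (d : ℂ) ^ 2}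

/-- D(ℂⁿ,ℂⁿ): the set of all real d > 0 such that for all X, Y ∈ ℂⁿ with
φ_n(X,Y) = d² there is a finite set S_XY with {X,Y} ⊆ S_XY ⊆ ℂⁿ such that every
map from S_XY to ℂⁿ preserving unit distance on S_XY preserves the distance
between X and Y. -/
def DCC (n : ℕ) : Set ℝ :=
  {d | 0 < d ∧ ∀ X Y : Fin n → ℂ, phi n X Y = (d : ℂ) ^ 2 →
    ∃ S : Finset (Fin n → ℂ), X ∈ S ∧ Y ∈ S ∧
      ∀ f : (Fin n → ℂ) → (Fin n → ℂ),
        (∀ P ∈ S, ∀ Q ∈ S, phi n P Q = 1 → phi n (f P) (f Q) = 1) →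
        phi n (f X) (f Y) = (d : ℂ) ^ 2}

section Aux

open Finset Module

/-- The standard complex symmetric bilinear form on ℂⁿ. -/
noncomputable def Bf (n : ℕ) : LinearMap.BilinForm ℂ (Fin n → ℂ) :=
  LinearMap.mk₂ ℂ (fun x y => ∑ i, x i * y i)
    (fun x x' y => by simp [add_mul, Finset.sum_add_distrib])
    (fun c x y => by
      simp only [Pi.smul_apply, smul_eq_mul, Finset.mul_sum]
      exact Finset.sum_congr rfl fun i _ => by ring)
    (fun x y y' => by simp [mul_add, Finset.sum_add_distrib])
    (fun c x y => by
      simp only [Pi.smul_apply, smul_eq_mul, Finset.mul_sum]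
      exact Finset.sum_congr rfl fun i _ => by ring)

@[simp] lemma Bf_apply (n : ℕ) (x y : Fin n → ℂ) : Bf n x y = ∑ i, x i * y i := rfl

lemma Bf_symm (n : ℕ) (x y : Fin n → ℂ) : Bf n x y = Bf n y x := by
  simp only [Bf_apply]
  exact Finset.sum_congr rfl fun i _ => mul_comm _ _

lemma Bf_isSymm (n : ℕ) : (Bf n).IsSymm := ⟨fun x y => Bf_symm n x y⟩

lemma Bf_refl (n : ℕ) : (Bf n).IsRefl := fun x y h => (Bf_symm n y x).trans h

lemma Bf_nondeg (n : ℕ) : (Bf n).Nondegenerate := by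
  refine ⟨fun x hx => ?_, fun x hx => ?_⟩ <;>
  funext i <;>
  have := hx (Pi.single i 1) <;>
  simpa [Pi.single_apply, mul_ite, ite_mul, Finset.sum_ite_eq', Finset.sum_ite_eq] using this

/-- Any complex vector of "square norm" one extends to an orthogonal transformation
sending the first standard basis vector to it. -/
lemma exists_lin (n : ℕ) [NeZero n] (v : Fin n → ℂ) (hv : ∑ i, v i * v i = 1) :
    ∃ T : (Fin n → ℂ) →ₗ[ℂ] (Fin n → ℂ),
      T (Pi.single 0 1) = v ∧ ∀ x, ∑ i, T x i ^ 2 = ∑ i, x i ^ 2 := by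
  classical
  have hvo : ¬ (Bf n).IsOrtho v v := by
    simp [LinearMap.BilinForm.isOrtho_def, hv]
  set W := (Bf n).orthogonal (ℂ ∙ v) with hWdef
  have hres : ((Bf n).restrict W).Nondegenerate :=
    LinearMap.BilinForm.restrict_nondegenerate_orthogonal_spanSingleton _ (Bf_nondeg n)
      (Bf_refl n) hvo
  have hressymm : ((Bf n).restrict W).IsSymm := by
    constructor
    intro x y
    simpa using Bf_symm n x y
  set QW : QuadraticForm ℂ W := ((Bf n).restrict W).toQuadraticMap with hQWdef
  have hQWnd : (QuadraticMap.associated (R := ℂ) QW).SeparatingLeft := by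
    rw [hQWdef, QuadraticMap.associated_left_inverse ℂ hressymm.eq]
    exact hres.1
  obtain ⟨E⟩ := QuadraticForm.equivalent_sum_squares QW hQWnd
  set m := finrank ℂ W with hmdef
  have hvne : v ≠ 0 := by
    intro h
    rw [h] at hv
    simp at hv
  have hm' : n - 1 = m := by
    rw [hmdef, hWdef, LinearMap.BilinForm.finrank_orthogonal (Bf_nondeg n)]
    rw [finrank_span_singleton hvne]
    simp
  have hQ : ∀ r : Fin m → ℂ, Bf n (E.symm r) (E.symm r) = ∑ i, r i * r i := by
    intro r
    have h := E.symm.map_app r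
    simp only [hQWdef, LinearMap.BilinMap.toQuadraticMap_apply,
      LinearMap.BilinForm.restrict_apply, LinearMap.domRestrict_apply,
      QuadraticMap.weightedSumSquares_apply,
      Pi.one_apply, one_smul, smul_eq_mul, one_mul] at h
    exact h
  have hBE : ∀ p q : Fin m → ℂ, Bf n (E.symm p) (E.symm q) = ∑ i, p i * q i := by
    intro p q
    have h1 := hQ (p + q)
    have h2 := hQ p
    have h3 := hQ q
    have hadd : ((E.symm (p + q) : W) : Fin n → ℂ)
        = (E.symm p : Fin n → ℂ) + (E.symm q : Fin n → ℂ) := by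
      rw [map_add, Submodule.coe_add]
    rw [hadd] at h1
    simp only [map_add, LinearMap.add_apply] at h1
    have hs := Bf_symm n (E.symm q : Fin n → ℂ) (E.symm p : Fin n → ℂ)
    have expand : ∑ i, (p + q) i * (p + q) i
        = (∑ i, p i * p i) + (∑ i, q i * q i) + 2 * ∑ i, p i * q i := by
      rw [Finset.mul_sum, ← Finset.sum_add_distrib, ← Finset.sum_add_distrib]
      exact Finset.sum_congr rfl fun i _ => by simp; ring
    rw [expand] at h1
    linear_combination (h1 - h2 - h3 - hs) / 2
  have hvW : ∀ w : W, Bf n v (w : Fin n → ℂ) = 0 := fun w =>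
    w.2 v (Submodule.mem_span_singleton_self v)
  have hvalne : ∀ (i : Fin n), ¬ i = 0 → (i : ℕ) ≠ 0 := by
    intro i h h0
    exact h (Fin.ext (by simp [h0]))
  have hidx : ∀ (i : Fin n), ¬ i = 0 → (i : ℕ) - 1 < m := by
    intro i h
    have h1 : (i : ℕ) < n := i.isLt
    have h2 := hvalne i h
    have h3 := hm'
    omega
  set c : Fin n → (Fin n → ℂ) := fun i =>
    if h : i = 0 then v
      else (E.symm (Pi.single (⟨(i : ℕ) - 1, hidx i h⟩ : Fin m) 1) : Fin n → ℂ)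
    with hcdef
  have hc0 : c 0 = v := by simp [hcdef]
  have hcne : ∀ (i : Fin n) (h : ¬ i = 0),
      c i = (E.symm (Pi.single (⟨(i : ℕ) - 1, hidx i h⟩ : Fin m) 1) : Fin n → ℂ) := by
    intro i h
    simp [hcdef, h]
  have hc : ∀ i j, Bf n (c i) (c j) = if i = j then 1 else 0 := by
    intro i j
    by_cases hi : i = 0 <;> by_cases hj : j = 0
    · subst hi; subst hj
      rw [hc0, if_pos rfl]
      exact hv
    · subst hi
      rw [hc0, hcne j hj, if_neg (fun hh => hj hh.symm)]
      exact hvW _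
    · subst hj
      rw [hc0, hcne i hi, if_neg hi, Bf_symm]
      exact hvW _
    · rw [hcne i hi, hcne j hj, hBE]
      rcases eq_or_ne i j with rfl | hij
      · simp [Pi.single_apply, mul_ite, Finset.sum_ite_eq']
      · have h2i := hvalne i hi
        have h2j := hvalne j hj
        have hab : (⟨(i : ℕ) - 1, hidx i hi⟩ : Fin m) ≠ ⟨(j : ℕ) - 1, hidx j hj⟩ := by
          intro hcast
          exact hij (Fin.ext (by have := Fin.mk.inj_iff.mp hcast; omega))
        have hab' : ¬ ((j : ℕ) - 1 = (i : ℕ) - 1) := by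
          intro h
          exact hij (Fin.ext (by omega))
        simp [Pi.single_apply, mul_ite, ite_mul, Finset.sum_ite_eq', hab, hab', hij]
  set T : (Fin n → ℂ) →ₗ[ℂ] (Fin n → ℂ) :=
    ∑ i, (LinearMap.proj i).smulRight (c i) with hTdef
  have hTx : ∀ x, T x = ∑ i, x i • c i := by
    intro x
    simp [hTdef, LinearMap.sum_apply]
  have hBz : ∀ z : Fin n → ℂ, ∑ i, z i ^ 2 = Bf n z z := by
    intro z
    simp [sq]
  refine ⟨T, ?_, ?_⟩
  · rw [hTx]
    rw [Finset.sum_eq_single (0 : Fin n)]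
    · simp [hc0]
    · intro b _ hb
      rw [Pi.single_eq_of_ne hb, zero_smul]
    · intro h
      exact absurd (Finset.mem_univ _) h
  · intro x
    have expand : Bf n (∑ i, x i • c i) (∑ j, x j • c j)
        = ∑ i, ∑ j, x i * (x j * (if i = j then 1 else 0)) := by
      have step1 : ∀ y, Bf n (∑ i, x i • c i) y = ∑ i, x i * Bf n (c i) y := by
        intro y
        rw [map_sum, LinearMap.sum_apply]
        exact Finset.sum_congr rfl fun i _ => by
          rw [map_smul, LinearMap.smul_apply, smul_eq_mul]
      rw [step1]
      refine Finset.sum_congr rfl fun i _ => ?_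
      rw [map_sum, Finset.mul_sum]
      refine Finset.sum_congr rfl fun j _ => ?_
      rw [map_smul, smul_eq_mul, hc]
    have final : ∑ i, ∑ j, x i * (x j * (if i = j then 1 else 0)) = Bf n x x := by
      rw [Bf_apply]
      refine Finset.sum_congr rfl fun i _ => ?_
      simp only [mul_ite, mul_one, mul_zero]
      rw [Finset.sum_ite_eq Finset.univ i (fun j => x i * x j)]
      simp
    rw [hBz, hBz, hTx, expand, final]

end Aux

/-- For each n ≥ 1, D(ℝⁿ,ℂⁿ) ⊆ D(ℂⁿ,ℂⁿ). -/
theorem stmt_12 (n : ℕ) (hn : 1 ≤ n) : DRC n ⊆ DCC n := by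
  haveI : NeZero n := ⟨by omega⟩
  rintro d ⟨hd0, hDRC⟩
  refine ⟨hd0, ?_⟩
  intro X Y hXY
  have hdC : (d : ℂ) ≠ 0 := by
    exact_mod_cast Complex.ofReal_ne_zero.mpr hd0.ne'
  set v : Fin n → ℂ := (d : ℂ)⁻¹ • (Y - X) with hvdef
  have hv : ∑ i, v i * v i = 1 := by
    have : ∑ i, (Y i - X i) ^ 2 = (d : ℂ) ^ 2 := by
      rw [← hXY]
      unfold phi
      exact Finset.sum_congr rfl fun i _ => by ring
    calc ∑ i, v i * v i = (d : ℂ)⁻¹ ^ 2 * ∑ i, (Y i - X i) ^ 2 := by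
          rw [Finset.mul_sum]
          exact Finset.sum_congr rfl fun i _ => by simp [hvdef]; ring
      _ = 1 := by
          rw [this]
          field_simp
  obtain ⟨T, hT1, hT2⟩ := exists_lin n v hv
  set g : (Fin n → ℂ) → (Fin n → ℂ) := fun P => X + T P with hgdef
  have hg : ∀ P Q : Fin n → ℂ, phi n (g P) (g Q) = phi n P Q := by
    intro P Q
    have h2 := hT2 (P - Q)
    unfold phi
    calc ∑ i, (g P i - g Q i) ^ 2 = ∑ i, (T (P - Q)) i ^ 2 := by
          refine Finset.sum_congr rfl fun i _ => ?_
          rw [map_sub]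
          simp only [hgdef, Pi.add_apply, Pi.sub_apply]
          ring
      _ = ∑ i, (P i - Q i) ^ 2 := by
          rw [h2]
          exact Finset.sum_congr rfl fun i _ => by simp
  set X' : Fin n → ℂ := 0 with hX'def
  set Y' : Fin n → ℂ := Pi.single 0 (d : ℂ) with hY'def
  have hX'im : ∀ i, (X' i).im = 0 := by intro i; simp [hX'def]
  have hY'im : ∀ i, (Y' i).im = 0 := by
    intro i
    rcases eq_or_ne i 0 with h | h <;> simp [hY'def, h, Pi.single_apply]
  have hphiXY' : phi n X' Y' = (d : ℂ) ^ 2 := by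
    unfold phi
    have : ∀ i : Fin n, (X' i - Y' i) ^ 2 = if i = 0 then (d : ℂ) ^ 2 else 0 := by
      intro i
      rcases eq_or_ne i 0 with h | h <;> simp [hX'def, hY'def, h, Pi.single_apply]
    simp_rw [this]
    rw [Finset.sum_ite_eq' Finset.univ (0 : Fin n)]
    simp
  obtain ⟨S, hXS, hYS, _, hS⟩ := hDRC X' Y' hX'im hY'im hphiXY'
  have hgX' : g X' = X := by simp [hgdef, hX'def]
  have hgY' : g Y' = Y := by
    have hsingle : (Pi.single (0 : Fin n) (d : ℂ)) = (d : ℂ) • (Pi.single 0 1 : Fin n → ℂ) := by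
      funext i
      rcases eq_or_ne i 0 with h | h <;> simp [h, Pi.single_apply]
    simp only [hgdef]
    rw [hY'def, hsingle, map_smul, hT1, hvdef, smul_smul,
      mul_inv_cancel₀ hdC, one_smul]
    simp
  refine ⟨S.image g, ?_, ?_, ?_⟩
  · rw [← hgX']; exact Finset.mem_image_of_mem g hXS
  · rw [← hgY']; exact Finset.mem_image_of_mem g hYS
  · intro f hf
    have := hS (f ∘ g) ?_
    · rw [← hgX', ← hgY']
      exact this
    · intro P hP Q hQ hPQ
      have h1 : phi n (g P) (g Q) = 1 := by rw [hg]; exact hPQ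
      exact hf (g P) (Finset.mem_image_of_mem g hP) (g Q) (Finset.mem_image_of_mem g hQ) h1
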